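/- arXiv:1509.06435 — 5 statements merged into one kernel-verified Lean document; each statement's English description precedes it below -/
import Mathlib

section
/- Let α ∈ (0,2]. The set of restrictions to (0,∞) of functions in X_α is dense in L²((0,∞)). -/
/-- `ζ = (π/2) min(1, 1/α)`. -/
noncomputable def zeta (α : ℝ) : ℝ := Real.pi / 2 * min 1 (1 / α)

/-- The class `X_α` of test functions: `u` is analytic in the sector `|arg x| < ζ`,
real-valued on `(0, ∞)`, and for every `ε ∈ (0, ζ)` there is `δ > 0` such that
`|u(x)| = O(|x|^{-δ|x|})` as `|x| → ∞` and `|u(x)| = O(1)` as `|x| → 0`, uniformly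
in the sector `|arg x| ≤ ζ - ε`. -/
def MemX (α : ℝ) (u : ℂ → ℂ) : Prop :=
  (∀ x : ℂ, x ≠ 0 → |Complex.arg x| < zeta α → AnalyticAt ℂ u x) ∧
  (∀ t : ℝ, 0 < t → (u t).im = 0) ∧
  (∀ ε : ℝ, 0 < ε → ε < zeta α → ∃ δ > 0, ∃ C > 0, ∃ r > 0, ∃ R > 0,
    (∀ x : ℂ, x ≠ 0 → |Complex.arg x| ≤ zeta α - ε → ‖x‖ ≤ r → ‖u x‖ ≤ C) ∧
    (∀ x : ℂ, x ≠ 0 → |Complex.arg x| ≤ zeta α - ε → R ≤ ‖x‖ →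
      ‖u x‖ ≤ C * ‖x‖ ^ (-δ * ‖x‖)))

open MeasureTheory

open Set




lemma zeta_le (α : ℝ) : zeta α ≤ Real.pi / 2 := by
  have : min 1 (1/α) ≤ 1 := min_le_left _ _
  have hπ : (0:ℝ) < Real.pi / 2 := by positivity
  calc zeta α = Real.pi / 2 * min 1 (1/α) := rfl
    _ ≤ Real.pi / 2 * 1 := by nlinarith
    _ = Real.pi / 2 := by ring

/-- the test functions -/
noncomputable def uu (n : ℕ) : ℂ → ℂ := fun z => Complex.exp (-(z * Complex.log z) - n * z)

noncomputable def pphi (n : ℕ) : ℝ → ℝ := fun x => Real.exp (-(x * Real.log x) - n * x)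

lemma uu_ofReal (n : ℕ) {t : ℝ} (ht : 0 < t) : uu n (t : ℂ) = ((pphi n t : ℝ) : ℂ) := by
  rw [uu, pphi, Complex.ofReal_exp]
  congr 1
  rw [← Complex.ofReal_log ht.le]
  push_cast
  ring

lemma re_z_mul_log (z : ℂ) :
    (z * Complex.log z).re = z.re * Real.log ‖z‖ - z.im * z.arg := by
  rw [Complex.mul_re, Complex.log_re, Complex.log_im]

lemma norm_uu (n : ℕ) (z : ℂ) :
    ‖uu n z‖ = Real.exp (-(z.re * Real.log ‖z‖ - z.im * z.arg) - n * z.re) := by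
  rw [uu, Complex.norm_exp]
  congr 1
  simp only [Complex.sub_re, Complex.neg_re, Complex.mul_re, Complex.log_re, Complex.log_im,
    Complex.natCast_re, Complex.natCast_im]
  ring

lemma re_nonneg_of_arg (z : ℂ) (h : |z.arg| ≤ Real.pi / 2) : 0 ≤ z.re := by
  rw [← Complex.norm_mul_cos_arg]
  have := abs_le.1 h
  exact mul_nonneg (norm_nonneg z) (Real.cos_nonneg_of_mem_Icc ⟨this.1, this.2⟩)

lemma norm_uu_le_small (n : ℕ) {z : ℂ} (hz : z ≠ 0) (harg : |z.arg| ≤ Real.pi / 2)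
    (hr : ‖z‖ ≤ 1) : ‖uu n z‖ ≤ Real.exp (1 + Real.pi / 2) := by
  rw [norm_uu]
  apply Real.exp_le_exp.2
  set r := ‖z‖ with hrdef
  have hr0 : 0 < r := norm_pos_iff.mpr hz
  have h1 : -(z.re * Real.log r) ≤ 1 := by
    have hre : z.re ≤ r := Complex.re_le_norm z
    have hre0 : 0 ≤ z.re := re_nonneg_of_arg z harg
    have hlog : Real.log r ≤ r - 1 := Real.log_le_sub_one_of_pos hr0
    have hlog2 : Real.log (1/r) ≤ 1/r - 1 := Real.log_le_sub_one_of_pos (by positivity)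
    rw [Real.log_div one_ne_zero (ne_of_gt hr0), Real.log_one] at hlog2
    -- -log r ≤ 1/r - 1, so -(z.re * log r) ≤ z.re * (1/r - 1) ≤ r * (1/r - 1) = 1 - r ≤ 1
    rcases le_or_gt (Real.log r) 0 with h | h
    · have : -(z.re * Real.log r) = z.re * (-Real.log r) := by ring
      rw [this]
      have h2 : z.re * (-Real.log r) ≤ r * (-Real.log r) :=
        mul_le_mul_of_nonneg_right hre (by linarith)
      have h3 : r * (-Real.log r) ≤ r * (1/r - 1) :=
        mul_le_mul_of_nonneg_left (by linarith) hr0.le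
      have : r * (1/r - 1) = 1 - r := by field_simp
      nlinarith
    · nlinarith
  have h2 : z.im * z.arg ≤ Real.pi / 2 := by
    calc z.im * z.arg ≤ |z.im * z.arg| := le_abs_self _
      _ = |z.im| * |z.arg| := abs_mul _ _
      _ ≤ 1 * (Real.pi / 2) := by
          apply mul_le_mul _ harg (abs_nonneg _) zero_le_one
          exact le_trans (Complex.abs_im_le_norm z) hr
      _ = Real.pi / 2 := one_mul _
  have h3 : 0 ≤ (n : ℝ) * z.re := mul_nonneg (Nat.cast_nonneg n) (re_nonneg_of_arg z harg)
  linarith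

lemma cos_ge_sin {θ ε : ℝ} (hε1 : 0 < ε) (hε2 : ε ≤ Real.pi / 2)
    (h : |θ| ≤ Real.pi / 2 - ε) : Real.sin ε ≤ Real.cos θ := by
  rw [← Real.cos_abs θ, ← Real.cos_pi_div_two_sub ε]
  apply Real.cos_le_cos_of_nonneg_of_le_pi (abs_nonneg _) _ h
  · have := Real.pi_pos; linarith

lemma norm_uu_le_large (n : ℕ) {ε : ℝ} (hε1 : 0 < ε) (hε2 : ε ≤ Real.pi / 2)
    {z : ℂ} (hz : z ≠ 0) (harg : |z.arg| ≤ Real.pi / 2 - ε)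
    (hR : Real.exp (Real.pi / Real.sin ε) ≤ ‖z‖) :
    ‖uu n z‖ ≤ ‖z‖ ^ (-(Real.sin ε / 2) * ‖z‖) := by
  have hπ := Real.pi_pos
  have hsin : 0 < Real.sin ε := Real.sin_pos_of_pos_of_lt_pi hε1 (by linarith)
  set r := ‖z‖ with hrdef
  have hr1 : 1 < r := lt_of_lt_of_le (by
    rw [show (1:ℝ) = Real.exp 0 by simp]
    exact Real.exp_lt_exp.2 (by positivity)) hR
  have hr0 : 0 < r := by linarith
  have hL : Real.pi / Real.sin ε ≤ Real.log r := by
    rw [← Real.log_exp (Real.pi / Real.sin ε)]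
    exact Real.log_le_log (Real.exp_pos _) hR
  have hL0 : 0 < Real.log r := lt_of_lt_of_le (by positivity) hL
  rw [norm_uu, Real.rpow_def_of_pos hr0, Real.exp_le_exp]
  have hre : z.re = r * Real.cos z.arg := (Complex.norm_mul_cos_arg z).symm
  have him : z.im = r * Real.sin z.arg := (Complex.norm_mul_sin_arg z).symm
  have hcos : Real.sin ε ≤ Real.cos z.arg := cos_ge_sin hε1 hε2 harg
  have h1 : r * Real.sin ε * Real.log r ≤ z.re * Real.log r := by
    rw [hre]
    have : r * Real.sin ε ≤ r * Real.cos z.arg := by nlinarith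
    nlinarith
  have h2 : z.im * z.arg ≤ r * (Real.pi / 2) := by
    calc z.im * z.arg ≤ |z.im * z.arg| := le_abs_self _
      _ = |z.im| * |z.arg| := abs_mul _ _
      _ ≤ r * (Real.pi / 2) := by
          apply mul_le_mul _ (le_trans harg (by linarith)) (abs_nonneg _) hr0.le
          exact Complex.abs_im_le_norm z
  have h3 : 0 ≤ (n : ℝ) * z.re := by
    apply mul_nonneg (Nat.cast_nonneg n)
    apply re_nonneg_of_arg
    linarith [abs_le.1 harg]
  -- goal: -(z.re * log r - z.im * arg) - n z.re ≤ (-(sin ε / 2) * r) * log r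
  have key : r * (Real.pi/2) ≤ Real.sin ε / 2 * r * Real.log r := by
    have h4 : Real.pi / Real.sin ε * (Real.sin ε / 2 * r) ≤ Real.log r * (Real.sin ε / 2 * r) := by
      apply mul_le_mul_of_nonneg_right hL (by positivity)
    have h5 : Real.pi / Real.sin ε * (Real.sin ε / 2 * r) = r * (Real.pi/2) := by
      field_simp
    linarith
  nlinarith

lemma memX_uu (α : ℝ) (hα : 0 < α) (n : ℕ) : MemX α (uu n) := by
  have hπ := Real.pi_pos
  have hζ := zeta_le α
  refine ⟨?_, ?_, ?_⟩
  · intro x hx harg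
    have hslit : x ∈ Complex.slitPlane := by
      rw [Complex.mem_slitPlane_iff_arg]
      refine ⟨?_, hx⟩
      intro h
      rw [h] at harg
      have : |Real.pi| = Real.pi := abs_of_pos hπ
      have := lt_of_lt_of_le harg hζ
      linarith [this, abs_of_pos hπ]
    have hlog : AnalyticAt ℂ Complex.log x := analyticAt_clog hslit
    have h1 : AnalyticAt ℂ (fun z => -(z * Complex.log z) - n * z) x := by
      exact (((analyticAt_id).mul hlog).neg).sub ((analyticAt_const).mul analyticAt_id)
    exact (analyticAt_cexp.comp h1 : _)
  · intro t ht
    rw [uu_ofReal n ht, Complex.ofReal_im]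
  · intro ε hε1 hε2
    have hε2' : ε ≤ Real.pi / 2 := le_trans hε2.le hζ
    have hsin : 0 < Real.sin ε := Real.sin_pos_of_pos_of_lt_pi hε1 (by linarith)
    refine ⟨Real.sin ε / 2, by positivity, Real.exp (1 + Real.pi / 2), Real.exp_pos _,
      1, one_pos, Real.exp (Real.pi / Real.sin ε), Real.exp_pos _, ?_, ?_⟩
    · intro x hx harg hxr
      exact norm_uu_le_small n hx (le_trans harg (by linarith)) hxr
    · intro x hx harg hxR
      have h1 : ‖uu n x‖ ≤ ‖x‖ ^ (-(Real.sin ε / 2) * ‖x‖) :=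
        norm_uu_le_large n hε1 hε2' hx (le_trans harg (by linarith)) hxR
      calc ‖uu n x‖ ≤ ‖x‖ ^ (-(Real.sin ε / 2) * ‖x‖) := h1
        _ = ‖x‖ ^ (-(Real.sin ε / 2) * ‖x‖) := rfl
        _ ≤ Real.exp (1 + Real.pi / 2) * ‖x‖ ^ (-(Real.sin ε / 2) * ‖x‖) := by
            apply le_mul_of_one_le_left (Real.rpow_nonneg (norm_nonneg x) _)
            exact Real.one_le_exp (by positivity)

lemma memX_zero (α : ℝ) : MemX α (fun _ => 0) := by
  refine ⟨fun x _ _ => analyticAt_const, fun t _ => by simp, fun ε hε1 hε2 => ?_⟩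
  refine ⟨1, one_pos, 1, one_pos, 1, one_pos, 1, one_pos, ?_, ?_⟩
  · intro x _ _ _; simp
  · intro x _ _ _
    simp only [norm_zero]
    positivity

lemma MemX.add {α : ℝ} {u v : ℂ → ℂ} (hu : MemX α u) (hv : MemX α v) :
    MemX α (fun z => u z + v z) := by
  obtain ⟨hu1, hu2, hu3⟩ := hu
  obtain ⟨hv1, hv2, hv3⟩ := hv
  refine ⟨fun x hx harg => (hu1 x hx harg).add (hv1 x hx harg),
    fun t ht => by rw [Complex.add_im, hu2 t ht, hv2 t ht, add_zero], ?_⟩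
  intro ε hε1 hε2
  obtain ⟨δ1, hδ1, C1, hC1, r1, hr1, R1, hR1, hs1, hl1⟩ := hu3 ε hε1 hε2
  obtain ⟨δ2, hδ2, C2, hC2, r2, hr2, R2, hR2, hs2, hl2⟩ := hv3 ε hε1 hε2
  refine ⟨min δ1 δ2, lt_min hδ1 hδ2, C1 + C2, by positivity, min r1 r2, lt_min hr1 hr2,
    max 1 (max R1 R2), by positivity, ?_, ?_⟩
  · intro x hx harg hxr
    calc ‖u x + v x‖ ≤ ‖u x‖ + ‖v x‖ := norm_add_le _ _
      _ ≤ C1 + C2 := add_le_add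
          (hs1 x hx harg (le_trans hxr (min_le_left _ _)))
          (hs2 x hx harg (le_trans hxr (min_le_right _ _)))
  · intro x hx harg hxR
    have hx1 : (1:ℝ) ≤ ‖x‖ := le_trans (le_max_left _ _) hxR
    have key : ∀ δ : ℝ, min δ1 δ2 ≤ δ →
        ‖x‖ ^ (-δ * ‖x‖) ≤ ‖x‖ ^ (-(min δ1 δ2) * ‖x‖) := by
      intro δ hδ
      apply Real.rpow_le_rpow_of_exponent_le hx1
      have : (0:ℝ) ≤ ‖x‖ := norm_nonneg _
      nlinarith
    calc ‖u x + v x‖ ≤ ‖u x‖ + ‖v x‖ := norm_add_le _ _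
      _ ≤ C1 * ‖x‖ ^ (-δ1 * ‖x‖) + C2 * ‖x‖ ^ (-δ2 * ‖x‖) := add_le_add
          (hl1 x hx harg (le_trans (le_trans (le_max_left _ _) (le_max_right 1 _)) hxR))
          (hl2 x hx harg (le_trans (le_trans (le_max_right _ _) (le_max_right 1 _)) hxR))
      _ ≤ C1 * ‖x‖ ^ (-(min δ1 δ2) * ‖x‖) + C2 * ‖x‖ ^ (-(min δ1 δ2) * ‖x‖) := add_le_add
          (mul_le_mul_of_nonneg_left (key δ1 (min_le_left _ _)) hC1.le)
          (mul_le_mul_of_nonneg_left (key δ2 (min_le_right _ _)) hC2.le)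
      _ = (C1 + C2) * ‖x‖ ^ (-(min δ1 δ2) * ‖x‖) := by ring

lemma MemX.smul {α : ℝ} {u : ℂ → ℂ} (hu : MemX α u) (c : ℝ) :
    MemX α (fun z => (c : ℂ) * u z) := by
  obtain ⟨hu1, hu2, hu3⟩ := hu
  refine ⟨fun x hx harg => (analyticAt_const).mul (hu1 x hx harg),
    fun t ht => by rw [Complex.mul_im, Complex.ofReal_im, Complex.ofReal_re, hu2 t ht]; ring, ?_⟩
  intro ε hε1 hε2
  obtain ⟨δ, hδ, C, hC, r, hr, R, hR, hs, hl⟩ := hu3 ε hε1 hε2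
  have hnorm : ∀ x : ℂ, ‖(c:ℂ) * u x‖ = |c| * ‖u x‖ := by
    intro x
    rw [norm_mul, Complex.norm_real, Real.norm_eq_abs]
  refine ⟨δ, hδ, (|c| + 1) * C, by positivity, r, hr, R, hR, ?_, ?_⟩
  · intro x hx harg hxr
    rw [hnorm]
    calc |c| * ‖u x‖ ≤ |c| * C := mul_le_mul_of_nonneg_left (hs x hx harg hxr) (abs_nonneg c)
      _ ≤ (|c| + 1) * C := by nlinarith
  · intro x hx harg hxR
    rw [hnorm]
    have h0 : (0:ℝ) ≤ ‖x‖ ^ (-δ * ‖x‖) := Real.rpow_nonneg (norm_nonneg x) _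
    calc |c| * ‖u x‖ ≤ |c| * (C * ‖x‖ ^ (-δ * ‖x‖)) :=
          mul_le_mul_of_nonneg_left (hl x hx harg hxR) (abs_nonneg c)
      _ ≤ (|c| + 1) * C * ‖x‖ ^ (-δ * ‖x‖) := by nlinarith

lemma moments_zero {h : ℝ → ℝ} (hint : Integrable h (volume.restrict (Ioi 0)))
    (hmom : ∀ n : ℕ, ∫ x in Ioi 0, h x * Real.exp (-x) ^ n = 0) :
    ∀ᵐ x ∂(volume.restrict (Ioi (0:ℝ))), h x = 0 := by
  set μ := volume.restrict (Ioi (0:ℝ)) with hμ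
  have hexp_mem : ∀ n : ℕ, ∀ᵐ x ∂μ, ‖Real.exp (-x) ^ n‖ ≤ 1 := by
    intro n
    filter_upwards [ae_restrict_mem measurableSet_Ioi] with x hx
    rw [Real.norm_eq_abs, abs_of_nonneg (by positivity)]
    apply pow_le_one₀ (Real.exp_pos _).le
    exact Real.exp_le_one_iff.2 (by simp [le_of_lt (mem_Ioi.1 hx)])
  have hint_exp : ∀ n : ℕ, Integrable (fun x => Real.exp (-x) ^ n * h x) μ := by
    intro n
    exact hint.bdd_mul ((Real.continuous_exp.comp continuous_neg).pow n).aestronglyMeasurable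
      (hexp_mem n)
  -- Step 1: polynomial moments vanish
  have hpint : ∀ p : Polynomial ℝ, Integrable (fun x => h x * p.eval (Real.exp (-x))) μ := by
    intro p
    have : Integrable (fun x => ∑ i ∈ Finset.range (p.natDegree + 1),
        p.coeff i * (Real.exp (-x) ^ i * h x)) μ :=
      integrable_finset_sum _ (fun i _ => (hint_exp i).const_mul _)
    apply this.congr
    apply Filter.Eventually.of_forall
    intro x
    dsimp only
    rw [Polynomial.eval_eq_sum_range, Finset.mul_sum]
    congr 1
    ext i
    ring
  have hpoly : ∀ p : Polynomial ℝ, ∫ x in Ioi (0:ℝ), h x * p.eval (Real.exp (-x)) = 0 := by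
    intro p
    have hrw : ∀ x : ℝ, h x * p.eval (Real.exp (-x)) =
        ∑ i ∈ Finset.range (p.natDegree + 1), p.coeff i * (h x * Real.exp (-x) ^ i) := by
      intro x
      rw [Polynomial.eval_eq_sum_range, Finset.mul_sum]
      congr 1
      ext i
      ring
    calc ∫ x in Ioi (0:ℝ), h x * p.eval (Real.exp (-x))
        = ∫ x in Ioi (0:ℝ), ∑ i ∈ Finset.range (p.natDegree + 1),
            p.coeff i * (h x * Real.exp (-x) ^ i) :=
          integral_congr_ae (Filter.Eventually.of_forall hrw)
      _ = ∑ i ∈ Finset.range (p.natDegree + 1),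
            ∫ x in Ioi (0:ℝ), p.coeff i * (h x * Real.exp (-x) ^ i) := by
          apply integral_finset_sum
          intro i _
          exact ((hint_exp i).congr (Filter.Eventually.of_forall fun x => by ring)).const_mul _
      _ = ∑ i ∈ Finset.range (p.natDegree + 1), p.coeff i *
            ∫ x in Ioi (0:ℝ), h x * Real.exp (-x) ^ i := by
          congr 1
          ext i
          rw [← integral_const_mul]
      _ = 0 := by
          apply Finset.sum_eq_zero
          intro i _
          rw [hmom i, mul_zero]
  -- Step 2: continuous compactly supported test functions
  have hcont : ∀ g : ℝ → ℝ, Continuous g → HasCompactSupport g →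
      ∫ x in Ioi (0:ℝ), g x * h x = 0 := by
    intro g hgc hgs
    obtain ⟨M, hM⟩ := (Metric.isBounded_iff_subset_closedBall 0).1 hgs.isBounded
    have hMsup : tsupport g ⊆ Icc (-M) M := by
      intro x hx
      have := hM hx
      rw [Real.closedBall_eq_Icc] at this
      simpa using this
    set F : ℝ → ℝ := fun t => if 0 < t then g (-Real.log t) else 0 with hF
    have hF_eq : ∀ x : ℝ, F (Real.exp (-x)) = g x := by
      intro x
      rw [hF]
      simp only [Real.exp_pos, if_true, Real.log_exp, neg_neg]
    have hFcont : ContinuousOn F (Icc 0 1) := by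
      intro t ht
      rcases eq_or_lt_of_le ht.1 with rfl | htpos
      · have hev : F =ᶠ[nhds (0:ℝ)] (fun _ => 0) := by
          filter_upwards [Iio_mem_nhds (Real.exp_pos (-M))] with s hs
          rw [hF]
          by_cases hs0 : 0 < s
          · simp only [hs0, if_true]
            apply image_eq_zero_of_notMem_tsupport
            intro hmem
            have h1 := (hMsup hmem).2
            have hlog : Real.log s < -M := by
              have := Real.log_lt_log hs0 hs
              rwa [Real.log_exp] at this
            linarith
          · simp [hs0]
        exact (continuousAt_const.congr hev.symm).continuousWithinAt
      · refine ContinuousAt.continuousWithinAt ?_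
        have hev : F =ᶠ[nhds t] (fun s => g (-Real.log s)) := by
          filter_upwards [Ioi_mem_nhds htpos] with s hs
          rw [hF]
          simp [mem_Ioi.1 hs]
        apply ContinuousAt.congr _ hev.symm
        exact hgc.continuousAt.comp ((Real.continuousAt_log (ne_of_gt htpos)).neg)
    set A := ∫ x in Ioi (0:ℝ), g x * h x with hA
    have hgint : Integrable (fun x => g x * h x) μ := by
      obtain ⟨C, hC⟩ := hgc.bounded_above_of_compact_support hgs
      exact hint.bdd_mul hgc.aestronglyMeasurable
        (Filter.Eventually.of_forall fun x => by simpa using hC x)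
    have hK : ∀ ε : ℝ, 0 < ε → |A| ≤ ε * ((∫ x in Ioi (0:ℝ), ‖h x‖) + 1) := by
      intro ε hε
      obtain ⟨p, hp⟩ := exists_polynomial_near_of_continuousOn 0 1 F hFcont ε hε
      have hsub : Integrable (fun x => (g x - p.eval (Real.exp (-x))) * h x) μ := by
        apply (hgint.sub (hpint p)).congr
        apply Filter.Eventually.of_forall
        intro x
        simp only [Pi.sub_apply]
        ring
      have hAeq : A = ∫ x in Ioi (0:ℝ), (g x - p.eval (Real.exp (-x))) * h x := by
        calc A = A - ∫ x in Ioi (0:ℝ), h x * p.eval (Real.exp (-x)) := by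
              rw [hpoly p, sub_zero]
          _ = ∫ x in Ioi (0:ℝ), (g x * h x - h x * p.eval (Real.exp (-x))) :=
              (integral_sub hgint (hpint p)).symm
          _ = ∫ x in Ioi (0:ℝ), (g x - p.eval (Real.exp (-x))) * h x :=
              integral_congr_ae (Filter.Eventually.of_forall fun x => by ring)
      rw [hAeq]
      calc |∫ x in Ioi (0:ℝ), (g x - p.eval (Real.exp (-x))) * h x|
          ≤ ∫ x in Ioi (0:ℝ), ‖(g x - p.eval (Real.exp (-x))) * h x‖ := by
            rw [← Real.norm_eq_abs]
            exact norm_integral_le_integral_norm _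
        _ ≤ ∫ x in Ioi (0:ℝ), ε * ‖h x‖ := by
            apply integral_mono_ae hsub.norm (hint.norm.const_mul ε)
            filter_upwards [ae_restrict_mem measurableSet_Ioi] with x hx
            have hmem : Real.exp (-x) ∈ Icc (0:ℝ) 1 :=
              ⟨(Real.exp_pos _).le, Real.exp_le_one_iff.2 (by simp [le_of_lt (mem_Ioi.1 hx)])⟩
            have hclose : |p.eval (Real.exp (-x)) - F (Real.exp (-x))| < ε := hp _ hmem
            rw [hF_eq x] at hclose
            rw [norm_mul]
            apply mul_le_mul_of_nonneg_right _ (norm_nonneg _)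
            rw [Real.norm_eq_abs, abs_sub_comm]
            exact hclose.le
        _ = ε * ∫ x in Ioi (0:ℝ), ‖h x‖ := integral_const_mul _ _
        _ ≤ ε * ((∫ x in Ioi (0:ℝ), ‖h x‖) + 1) := by nlinarith
    by_contra hA0
    have habs : 0 < |A| := abs_pos.2 hA0
    set I := ∫ x in Ioi (0:ℝ), ‖h x‖ with hI
    have hI0 : 0 ≤ I := integral_nonneg (fun x => norm_nonneg _)
    have := hK (|A| / (2 * (I + 1))) (by positivity)
    have h2 : |A| / (2 * (I + 1)) * (I + 1) = |A| / 2 := by field_simp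
    rw [h2] at this
    linarith
  -- Step 3: distributions
  have hio : IntegrableOn h (Ioi (0:ℝ)) volume := hint
  have := isOpen_Ioi.ae_eq_zero_of_integral_contDiff_smul_eq_zero (μ := volume)
    hio.locallyIntegrableOn ?_
  · exact (ae_restrict_iff' measurableSet_Ioi).2 this
  · intro ψ hψ hψs hψsup
    have : ∫ x, ψ x • h x ∂volume = ∫ x in Ioi (0:ℝ), ψ x • h x := by
      refine (setIntegral_eq_integral_of_forall_compl_eq_zero ?_).symm
      intro x hx
      rw [image_eq_zero_of_notMem_tsupport (fun hmem => hx (hψsup hmem)), zero_smul]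
    rw [this]
    simpa [smul_eq_mul] using hcont ψ hψ.continuous hψs

lemma pphi_measurable (n : ℕ) : Measurable (pphi n) := by
  apply Real.measurable_exp.comp
  exact ((measurable_id.mul Real.measurable_log).neg).sub (measurable_const.mul measurable_id)

lemma pphi_pos (n : ℕ) (x : ℝ) : 0 < pphi n x := Real.exp_pos _

lemma pphi_le (n : ℕ) {x : ℝ} (hx : 0 < x) : pphi n x ≤ Real.exp 1 * Real.exp (-x) := by
  rw [pphi, ← Real.exp_add]
  apply Real.exp_le_exp.2
  have hlog : -Real.log x ≤ 1/x - 1 := by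
    have := Real.log_le_sub_one_of_pos (show (0:ℝ) < 1/x by positivity)
    rwa [Real.log_div one_ne_zero (ne_of_gt hx), Real.log_one, zero_sub] at this
  have h2 : x * (-Real.log x) ≤ x * (1/x - 1) := mul_le_mul_of_nonneg_left hlog hx.le
  have h3 : x * (1/x - 1) = 1 - x := by field_simp
  have h4 : 0 ≤ (n:ℝ) * x := mul_nonneg (Nat.cast_nonneg n) hx.le
  nlinarith

lemma memℒp_pphi (n : ℕ) : MemLp (pphi n) 2 (volume.restrict (Ioi (0:ℝ))) := by
  rw [memLp_two_iff_integrable_sq (pphi_measurable n).aestronglyMeasurable]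
  have hg : Integrable (fun x => Real.exp 2 * Real.exp (-2*x)) (volume.restrict (Ioi (0:ℝ))) :=
    (exp_neg_integrableOn_Ioi 0 two_pos).const_mul _
  apply hg.mono' ((pphi_measurable n).pow_const 2).aestronglyMeasurable
  filter_upwards [ae_restrict_mem measurableSet_Ioi] with x hx
  have h1 := pphi_le n hx
  have h0 := (pphi_pos n x).le
  rw [Real.norm_eq_abs, abs_of_nonneg (by positivity)]
  have : (Real.exp 1 * Real.exp (-x))^2 = Real.exp 2 * Real.exp (-2*x) := by
    rw [← Real.exp_add, ← Real.exp_nat_mul, ← Real.exp_add]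
    ring_nf
  nlinarith [Real.exp_pos 2, Real.exp_pos (-2*x)]

/-- Property (v) of the class `X_α`: the restrictions to `(0, ∞)` of functions in `X_α`
are dense in `L²((0, ∞))`. -/
theorem stmt4 (α : ℝ) (hα1 : 0 < α) (hα2 : α ≤ 2) :
    Dense {f : Lp ℝ 2 (volume.restrict (Set.Ioi (0 : ℝ))) |
      ∃ u : ℂ → ℂ, MemX α u ∧
        ∀ᵐ x ∂(volume.restrict (Set.Ioi (0 : ℝ))), (f : ℝ → ℝ) x = (u (x : ℂ)).re} := by
  set μ := volume.restrict (Set.Ioi (0 : ℝ)) with hμ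
  set SS := {f : Lp ℝ 2 μ |
      ∃ u : ℂ → ℂ, MemX α u ∧ ∀ᵐ x ∂μ, (f : ℝ → ℝ) x = (u (x : ℂ)).re} with hSS
  set f : ℕ → Lp ℝ 2 μ := fun n => (memℒp_pphi n).toLp (pphi n) with hf
  -- each f n is in SS
  have hfSS : ∀ n, f n ∈ SS := by
    intro n
    refine ⟨uu n, memX_uu α hα1 n, ?_⟩
    filter_upwards [(memℒp_pphi n).coeFn_toLp, ae_restrict_mem measurableSet_Ioi] with x hx hx0
    rw [hx, uu_ofReal n hx0, Complex.ofReal_re]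
  -- SS contains the span of the f n
  have hspan : (Submodule.span ℝ (Set.range f) : Set (Lp ℝ 2 μ)) ⊆ SS := by
    intro x hx
    induction hx using Submodule.span_induction with
    | mem x hxm =>
        obtain ⟨n, rfl⟩ := hxm
        exact hfSS n
    | zero =>
        refine ⟨fun _ => 0, memX_zero α, ?_⟩
        filter_upwards [Lp.coeFn_zero ℝ 2 μ] with x hx
        simpa using hx
    | add x y _ _ hx hy =>
        obtain ⟨u, hu, hux⟩ := hx
        obtain ⟨v, hv, hvy⟩ := hy
        refine ⟨fun z => u z + v z, hu.add hv, ?_⟩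
        filter_upwards [Lp.coeFn_add x y, hux, hvy] with a ha hua hva
        rw [ha]
        simp only [Pi.add_apply, Complex.add_re, hua, hva]
    | smul c x _ hx =>
        obtain ⟨u, hu, hux⟩ := hx
        refine ⟨fun z => (c : ℂ) * u z, hu.smul c, ?_⟩
        filter_upwards [Lp.coeFn_smul c x, hux] with a ha hua
        rw [ha]
        simp only [Pi.smul_apply, smul_eq_mul, hua, Complex.mul_re, Complex.ofReal_re,
          Complex.ofReal_im, zero_mul, sub_zero]
  -- the span is dense
  have hdense : Dense (Submodule.span ℝ (Set.range f) : Set (Lp ℝ 2 μ)) := by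
    rw [Submodule.dense_iff_topologicalClosure_eq_top,
      Submodule.topologicalClosure_eq_top_iff]
    rw [Submodule.eq_bot_iff]
    intro g hg
    have hg' : ∀ n : ℕ, (inner ℝ (f n) g : ℝ) = 0 := fun n =>
      (Submodule.mem_orthogonal _ g).1 hg (f n) (Submodule.subset_span ⟨n, rfl⟩)
    -- translate inner products into integrals
    have hinner : ∀ n : ℕ, ∫ x, pphi n x * (g : ℝ → ℝ) x ∂μ = 0 := by
      intro n
      have h1 := MeasureTheory.L2.inner_def (𝕜 := ℝ) (f n) g
      rw [hg' n] at h1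
      have h2 : ∀ᵐ x ∂μ, (inner ℝ ((f n : ℝ → ℝ) x) ((g : ℝ → ℝ) x) : ℝ)
          = pphi n x * (g : ℝ → ℝ) x := by
        filter_upwards [(memℒp_pphi n).coeFn_toLp] with x hx
        simp [RCLike.inner_apply, hf, hx, mul_comm]
      rw [← integral_congr_ae h2, ← h1]
  -- the weight function h
    set h : ℝ → ℝ := fun x => pphi 0 x * (g : ℝ → ℝ) x with hh
    have hint : Integrable h μ := by
      have := MeasureTheory.L2.integrable_inner (𝕜 := ℝ) (f 0) g
      apply this.congr
      filter_upwards [(memℒp_pphi 0).coeFn_toLp] with x hx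
      simp [RCLike.inner_apply, hf, hx, hh, mul_comm]
    have hmom : ∀ n : ℕ, ∫ x in Ioi (0:ℝ), h x * Real.exp (-x) ^ n = 0 := by
      intro n
      refine Eq.trans ?_ (hinner n)
      apply integral_congr_ae
      apply Filter.Eventually.of_forall
      intro x
      simp only [hh]
      have : pphi n x = pphi 0 x * Real.exp (-x) ^ n := by
        rw [pphi, pphi, ← Real.exp_nat_mul, ← Real.exp_add]
        push_cast
        ring_nf
      rw [this]
      ring
    have hzero : ∀ᵐ x ∂μ, h x = 0 := moments_zero hint hmom
    have hgzero : (g : ℝ → ℝ) =ᵐ[μ] 0 := by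
      filter_upwards [hzero] with x hx
      have := pphi_pos 0 x
      rcases mul_eq_zero.1 hx with h1 | h1
      · exact absurd h1 (ne_of_gt this)
      · exact h1
    exact (Lp.eq_zero_iff_ae_eq_zero).2 hgzero
  exact hdense.mono hspan
end

section
/- Let α > 0 and β ∈ (0,2], and let v(x) := exp(−x^α), where x^α is the principal branch. Then v ∈ X_β if and only if 1 < α ≤ β. In particular, for 1 < α ≤ β ≤ 2 one has v ∈ X_β, while v ∉ X_β whenever β < α or α ≤ 1. -/
open Real Complex in
lemma norm_v (α : ℝ) (x : ℂ) (hx : x ≠ 0) :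
    ‖Complex.exp (-(x ^ (α:ℂ)))‖ = Real.exp (-(‖x‖ ^ α * Real.cos (α * x.arg))) := by
  have h0 : (0:ℝ) < ‖x‖ := by simpa using hx
  rw [Complex.norm_exp, Complex.neg_re,
    Complex.cpow_def_of_ne_zero hx, Complex.exp_re]
  congr 1
  rw [Complex.mul_re, Complex.mul_im]
  simp [Complex.log_re, Complex.log_im,
    Real.rpow_def_of_pos h0, mul_comm]

open Real Complex in
set_option maxHeartbeats 1000000 in
/-- For `α > 0` and `β ∈ (0, 2]`, the function `v(x) = exp(-x^α)` (principal branch)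
belongs to `X_β` if and only if `1 < α ≤ β`. -/
theorem stmt7 (α β : ℝ) (hα : 0 < α) (hβ1 : 0 < β) (hβ2 : β ≤ 2) :
    MemX β (fun x : ℂ => Complex.exp (-(x ^ (α : ℂ)))) ↔ (1 < α ∧ α ≤ β) := by
  have hzpos : 0 < zeta β := by
    have : 0 < min 1 (1/β) := lt_min one_pos (by positivity)
    have := Real.pi_pos
    unfold zeta; positivity
  have hzle : zeta β ≤ Real.pi / 2 := by
    have h1 : min 1 (1/β) ≤ 1 := min_le_left _ _
    have := Real.pi_pos
    unfold zeta; nlinarith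
  constructor
  · rintro ⟨hA, hRe, hD⟩
    have hα1 : 1 < α := by
      by_contra hcon
      push_neg at hcon
      obtain ⟨δ, hδ, C, hC, r, hr, R, hR0, hs, hb⟩ :=
        hD (zeta β / 2) (by linarith) (by linarith)
      set t : ℝ := max R (max (Real.exp (2/δ)) (max 1 C)) with ht
      have ht1 : (1:ℝ) ≤ t := le_trans (le_max_left _ _) (le_trans (le_max_right _ _) (le_max_right _ _))
      have htR : R ≤ t := le_max_left _ _
      have htC : C ≤ t := le_trans (le_max_right _ _) (le_trans (le_max_right _ _) (le_max_right _ _))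
      have htlog : 2/δ ≤ Real.log t := by
        calc 2/δ = Real.log (Real.exp (2/δ)) := (Real.log_exp _).symm
        _ ≤ Real.log t := Real.log_le_log (Real.exp_pos _)
            (le_trans (le_trans (le_max_left _ _) (le_max_right _ _)) (le_refl t))
      have htpos : (0:ℝ) < t := lt_of_lt_of_le one_pos ht1
      have hx0 : ((t:ℂ)) ≠ 0 := by
        simpa using ne_of_gt htpos
      have hargt : Complex.arg (t:ℂ) = 0 := Complex.arg_ofReal_of_nonneg htpos.le
      have hnormt : ‖(t:ℂ)‖ = t := by
        simp [abs_of_pos htpos]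
      have hbt := hb (t:ℂ) hx0 (by rw [hargt, abs_zero]; linarith) (by rw [hnormt]; exact htR)
      rw [norm_v α _ hx0, hnormt, hargt] at hbt
      simp only [mul_zero, Real.cos_zero, mul_one] at hbt
      have hrpow : t ^ (-δ * t) = Real.exp (-(δ * t * Real.log t)) := by
        rw [Real.rpow_def_of_pos htpos]; ring_nf
      rw [hrpow] at hbt
      -- hbt : exp (-(t^α)) ≤ C * exp (-(δ t log t))
      have key : Real.exp (δ * t * Real.log t - t ^ α) ≤ C := by
        have h := mul_le_mul_of_nonneg_right hbt (Real.exp_pos (δ * t * Real.log t)).le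
        calc Real.exp (δ * t * Real.log t - t ^ α)
            = Real.exp (-t ^ α) * Real.exp (δ * t * Real.log t) := by
              rw [← Real.exp_add]; ring_nf
        _ ≤ C * Real.exp (-(δ * t * Real.log t)) * Real.exp (δ * t * Real.log t) := h
        _ = C := by rw [mul_assoc, ← Real.exp_add]; simp
      have htα : t ^ α ≤ t := by
        calc t ^ α ≤ t ^ (1:ℝ) := Real.rpow_le_rpow_of_exponent_le ht1 hcon
        _ = t := Real.rpow_one t
      have h2t : 2 * t ≤ δ * t * Real.log t := by
        have h1 : 2 ≤ δ * Real.log t := by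
          rw [div_le_iff₀ hδ] at htlog; linarith [htlog]
        nlinarith
      have hexp : Real.exp t ≤ Real.exp (δ * t * Real.log t - t ^ α) :=
        Real.exp_le_exp.mpr (by linarith)
      have := Real.add_one_le_exp t
      linarith
    refine ⟨hα1, ?_⟩
    by_contra hcon
    push_neg at hcon
    have hαζ : Real.pi / 2 < α * zeta β := by
      rcases le_or_gt β 1 with hb1 | hb1
      · have hmin : min 1 (1/β) = 1 := min_eq_left (by rw [le_div_iff₀ hβ1]; linarith)
        rw [zeta, hmin]
        have := Real.pi_pos
        nlinarith
      · have hmin : min 1 (1/β) = 1/β := min_eq_right (by rw [div_le_one hβ1]; linarith)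
        rw [zeta, hmin]
        have hpi := Real.pi_pos
        rw [show α * (Real.pi / 2 * (1/β)) = Real.pi / 2 * (α / β) by field_simp]
        have h1 : 1 < α / β := (one_lt_div hβ1).mpr hcon
        nlinarith
    set m : ℝ := min 1 ((α * zeta β - Real.pi/2)/2) with hm
    have hm0 : 0 < m := lt_min one_pos (by linarith)
    have hm1 : m ≤ 1 := min_le_left _ _
    set θ : ℝ := (Real.pi/2 + m)/α with hθ
    have hθ0 : 0 < θ := by
      have := Real.pi_pos
      apply div_pos <;> nlinarith
    have hθζ : θ < zeta β := by
      rw [hθ, div_lt_iff₀ hα]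
      have : m ≤ (α * zeta β - Real.pi/2)/2 := min_le_right _ _
      nlinarith
    obtain ⟨δ, hδ, C, hC, r, hr, R, hR0, hs, hb⟩ :=
      hD (zeta β - θ) (by linarith) (by linarith)
    set c : ℝ := Real.sin m with hc
    have hcpos : 0 < c := Real.sin_pos_of_pos_of_lt_pi hm0 (by nlinarith [Real.pi_gt_three])
    set t : ℝ := max R (max 1 (C/c)) with htdef
    have ht1 : (1:ℝ) ≤ t := le_trans (le_max_left _ _) (le_max_right _ _)
    have htR : R ≤ t := le_max_left _ _
    have htC : C/c ≤ t := le_trans (le_max_right _ _) (le_max_right _ _)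
    have htpos : (0:ℝ) < t := lt_of_lt_of_le one_pos ht1
    set x : ℂ := (t:ℂ) * (Complex.cos (θ:ℂ) + Complex.sin (θ:ℂ) * Complex.I) with hxdef
    have hθIoc : θ ∈ Set.Ioc (-Real.pi) Real.pi := by
      constructor
      · nlinarith [Real.pi_pos]
      · nlinarith [Real.pi_pos]
    have hargx : Complex.arg x = θ := Complex.arg_mul_cos_add_sin_mul_I htpos hθIoc
    have hnormx : ‖x‖ = t := by
      rw [hxdef, norm_mul,
        Complex.norm_cos_add_sin_mul_I θ, Complex.norm_real, Real.norm_eq_abs, abs_of_pos htpos, mul_one]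
    have hx0 : x ≠ 0 := by
      intro h
      rw [h] at hnormx
      simp at hnormx
      linarith
    have hbt := hb x hx0 (by rw [hargx, abs_of_pos hθ0]; linarith) (by rw [hnormx]; exact htR)
    rw [norm_v α x hx0, hnormx, hargx] at hbt
    have hcosθ : Real.cos (α * θ) = -c := by
      rw [hθ, mul_div_cancel₀ _ (ne_of_gt hα), add_comm, Real.cos_add_pi_div_two]
    rw [hcosθ] at hbt
    have hrpow1 : t ^ (-δ * t) ≤ 1 :=
      Real.rpow_le_one_of_one_le_of_nonpos ht1
        (by rw [neg_mul]; exact neg_nonpos.mpr (mul_pos hδ htpos).le)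
    have htα : t ≤ t ^ α := by
      calc t = t ^ (1:ℝ) := (Real.rpow_one t).symm
      _ ≤ t ^ α := Real.rpow_le_rpow_of_exponent_le ht1 hα1.le
    have hctα : C ≤ c * t ^ α := by
      have : C/c ≤ t ^ α := le_trans htC htα
      rw [div_le_iff₀ hcpos] at this
      linarith [this]
    have hE : Real.exp (c * t ^ α) ≤ C := by
      calc Real.exp (c * t ^ α) = Real.exp (-(t ^ α * -c)) := by
            rw [show c * t ^ α = -(t ^ α * -c) by ring]
      _ ≤ C * t ^ (-δ * t) := hbt
      _ ≤ C * 1 := mul_le_mul_of_nonneg_left hrpow1 hC.le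
      _ = C := mul_one C
    have := Real.add_one_le_exp (c * t ^ α)
    linarith
  · rintro ⟨hα1, hαβ⟩
    have hαζ : α * zeta β ≤ Real.pi / 2 := by
      have hβ1' : 1 < β := lt_of_lt_of_le hα1 hαβ
      have hmin : min 1 (1/β) = 1/β := min_eq_right (by rw [div_le_one hβ1]; linarith)
      rw [zeta, hmin]
      have := Real.pi_pos
      rw [div_eq_inv_mul 1 β]
      have hβinv : 0 < β⁻¹ := by positivity
      have key : α * β⁻¹ ≤ 1 := by
        rw [← div_eq_mul_inv, div_le_one hβ1]; exact hαβ
      nlinarith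
    refine ⟨?_, ?_, ?_⟩
    · intro x hx harg
      have hre : 0 < x.re := by
        have : |Complex.arg x| < Real.pi / 2 := lt_of_lt_of_le harg hzle
        rcases Complex.abs_arg_lt_pi_div_two_iff.mp this with h | h
        · exact h
        · exact absurd h hx
      have h1 : AnalyticAt ℂ (fun z : ℂ => z ^ (α:ℂ)) x :=
        analyticAt_id.cpow analyticAt_const (Complex.mem_slitPlane_iff.mpr (Or.inl hre))
      exact analyticAt_cexp.comp h1.neg
    · intro t ht
      simp only
      rw [show ((t:ℂ)) ^ (α:ℂ) = ((t ^ α : ℝ) : ℂ) from (Complex.ofReal_cpow ht.le α).symm,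
        ← Complex.ofReal_neg, ← Complex.ofReal_exp, Complex.ofReal_im]
    · intro ε hε hεζ
      set c : ℝ := Real.cos (α * (zeta β - ε)) with hc
      have hangle : 0 ≤ α * (zeta β - ε) := by nlinarith
      have hangle2 : α * (zeta β - ε) < Real.pi / 2 := by nlinarith [mul_pos hα hε]
      have hcpos : 0 < c := Real.cos_pos_of_mem_Ioo
        ⟨by nlinarith [Real.pi_pos], hangle2⟩
      set s : ℝ := (α - 1)/2 with hs
      have hspos : 0 < s := by rw [hs]; linarith
      have hcosge : ∀ x : ℂ, |Complex.arg x| ≤ zeta β - ε → c ≤ Real.cos (α * x.arg) := by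
        intro x harg
        have h1 : Real.cos (α * x.arg) = Real.cos (α * |x.arg|) := by
          rcases abs_cases x.arg with ⟨h, _⟩ | ⟨h, _⟩
          · rw [h]
          · rw [show α * x.arg = -(α * |x.arg|) by rw [h]; ring, Real.cos_neg]
        rw [h1]
        apply Real.cos_le_cos_of_nonneg_of_le_pi
        · exact mul_nonneg hα.le (abs_nonneg _)
        · nlinarith [Real.pi_pos]
        · exact mul_le_mul_of_nonneg_left harg hα.le
      refine ⟨s * c, by positivity, 1, one_pos, 1, one_pos, 1, one_pos, ?_, ?_⟩
      · -- small x
        intro x hx harg hnorm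
        have hcos := hcosge x harg
        rw [norm_v α x hx]
        calc Real.exp (-(‖x‖ ^ α * Real.cos (α * x.arg))) ≤ Real.exp 0 := by
              apply Real.exp_le_exp.mpr
              have h1 : (0:ℝ) ≤ ‖x‖ ^ α := Real.rpow_nonneg (norm_nonneg x) α
              nlinarith
        _ = 1 := Real.exp_zero
      · -- large x
        intro x hx harg hnorm
        have hcos := hcosge x harg
        rw [norm_v α x hx, one_mul]
        set t : ℝ := ‖x‖ with htd
        have ht1 : (1:ℝ) ≤ t := hnorm
        have htpos : (0:ℝ) < t := lt_of_lt_of_le one_pos ht1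
        have hstep : s * c * t * Real.log t ≤ c * t ^ α := by
          have hlog : Real.log t ≤ t ^ s / s := Real.log_le_rpow_div htpos.le hspos
          have h2 : t * t ^ s = t ^ (1 + s) := by
            rw [Real.rpow_add htpos, Real.rpow_one]
          have h3 : t ^ (1+s) ≤ t ^ α :=
            Real.rpow_le_rpow_of_exponent_le ht1 (by rw [hs]; linarith)
          have h4 : s * c * t * Real.log t ≤ s * c * t * (t ^ s / s) := by
            have : 0 ≤ s * c * t := by positivity
            nlinarith
          calc s * c * t * Real.log t ≤ s * c * t * (t ^ s / s) := h4
          _ = c * (t * t ^ s) := by field_simp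
          _ = c * t ^ (1+s) := by rw [h2]
          _ ≤ c * t ^ α := by nlinarith
        have hrpow : t ^ (-(s*c) * t) = Real.exp (-(s * c * t * Real.log t)) := by
          rw [Real.rpow_def_of_pos htpos]; ring_nf
        rw [hrpow]
        apply Real.exp_le_exp.mpr
        have h5 : c * t ^ α ≤ t ^ α * Real.cos (α * x.arg) := by
          have h6 : (0:ℝ) ≤ t ^ α := Real.rpow_nonneg htpos.le α
          nlinarith
        linarith
end

section
/- Let α ∈ (0,2] and ρ ∈ (0,1) with |α(1/2 − ρ)| < 1, and set ρ̂ := 1 − ρ. Let S be a complex-valued function on the strip {z ∈ ℂ : 0 < Re z < 1+α} satisfying: (H1) S(z) · S(1+α−z) = 1 for all z with 0 < Re z < 1+α; (H2) S(z) = 2 sin(πz) · S(z+α) for all z with 0 < Re z < 1. Then for every real z > 0, setting w := −iα·ln(z)/(2π), the following Wiener–Hopf factorization identity holds: [e^{iπαρ/4} z^{−αρ/2} S(1/2 + α/4 + αρ/2 + w) S(1/2 + 3α/4 + αρ/2 − w)] · [e^{−iπαρ̂/4} z^{−αρ̂/2} S(1/2 + 5α/4 − αρ/2 + w) S(1/2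 + 3α/4 − αρ/2 − w)] = 1/(1 + z^α e^{iπα(1/2−ρ)}). -/
private lemma rpow_cast_cx (z r : ℝ) (hz : 0 < z) :
    ((z ^ r : ℝ) : ℂ) = Complex.exp ((r : ℂ) * (Real.log z : ℂ)) := by
  rw [Real.rpow_def_of_pos hz, Complex.ofReal_exp]
  push_cast
  ring_nf

/-- Verification of the Wiener–Hopf factorization (proof of Theorem 3.1): if `S` satisfies
the reflection identity (H1) and the second functional equation (H2) of the double sine
function on the strip `0 < Re z < 1 + α`, then for every `z > 0`, with
`w = -iα ln(z)/(2π)`, the product of the two candidate Wiener–Hopf factors equals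
`1/(1 + z^α e^{iπα(1/2 - ρ)})`. -/
theorem stmt10 (α ρ : ℝ) (hα1 : 0 < α) (hα2 : α ≤ 2) (hρ1 : 0 < ρ) (hρ2 : ρ < 1)
    (hadm : |α * (1 / 2 - ρ)| < 1)
    (S : ℂ → ℂ)
    (H1 : ∀ z : ℂ, 0 < z.re → z.re < 1 + α → S z * S (1 + (α : ℂ) - z) = 1)
    (H2 : ∀ z : ℂ, 0 < z.re → z.re < 1 →
      S z = 2 * Complex.sin ((Real.pi : ℂ) * z) * S (z + (α : ℂ))) :
    ∀ z : ℝ, 0 < z →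
      ∀ w : ℂ, w = -Complex.I * (α : ℂ) * (Real.log z : ℂ) / (2 * (Real.pi : ℂ)) →
      (Complex.exp (Complex.I * (Real.pi : ℂ) * (α : ℂ) * (ρ : ℂ) / 4) *
          ((z ^ (-(α * ρ) / 2) : ℝ) : ℂ) *
          S ((1 : ℂ) / 2 + (α : ℂ) / 4 + (α : ℂ) * (ρ : ℂ) / 2 + w) *
          S ((1 : ℂ) / 2 + 3 * (α : ℂ) / 4 + (α : ℂ) * (ρ : ℂ) / 2 - w)) *
      (Complex.exp (-(Complex.I * (Real.pi : ℂ) * (α : ℂ) * ((1 : ℂ) - (ρ : ℂ))) / 4) *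
          ((z ^ (-(α * (1 - ρ)) / 2) : ℝ) : ℂ) *
          S ((1 : ℂ) / 2 + 5 * (α : ℂ) / 4 - (α : ℂ) * (ρ : ℂ) / 2 + w) *
          S ((1 : ℂ) / 2 + 3 * (α : ℂ) / 4 - (α : ℂ) * (ρ : ℂ) / 2 - w)) =
      1 / (1 + ((z ^ α : ℝ) : ℂ) *
        Complex.exp (Complex.I * (Real.pi : ℂ) * (α : ℂ) * ((1 : ℂ) / 2 - (ρ : ℂ)))) := by
  intro z hz w hw
  have hπ : (Real.pi : ℂ) ≠ 0 := by exact_mod_cast Real.pi_ne_zero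
  set l : ℂ := (Real.log z : ℂ) with hl
  -- the key relation π w I = α l / 2
  have hwI : (Real.pi : ℂ) * w * Complex.I = (α : ℂ) * l / 2 := by
    rw [hw]
    field_simp
    linear_combination (-(α : ℂ) * l) * Complex.I_sq
  -- w is purely imaginary
  have hw0 : w.re = 0 := by
    have h : w = ((α * Real.log z / (2 * Real.pi) : ℝ) : ℂ) * (-Complex.I) := by
      rw [hw]; push_cast; field_simp; ring
    rw [h, Complex.mul_re]
    simp only [Complex.ofReal_re, Complex.ofReal_im, Complex.neg_re, Complex.neg_im,
      Complex.I_re, Complex.I_im]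
    ring
  -- names for the four points and the auxiliary point B'
  set A : ℂ := (1 : ℂ) / 2 + (α : ℂ) / 4 + (α : ℂ) * (ρ : ℂ) / 2 + w with hA
  set B : ℂ := (1 : ℂ) / 2 + 3 * (α : ℂ) / 4 + (α : ℂ) * (ρ : ℂ) / 2 - w with hB
  set Cc : ℂ := (1 : ℂ) / 2 + 5 * (α : ℂ) / 4 - (α : ℂ) * (ρ : ℂ) / 2 + w with hCc
  set Dd : ℂ := (1 : ℂ) / 2 + 3 * (α : ℂ) / 4 - (α : ℂ) * (ρ : ℂ) / 2 - w with hDd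
  set B' : ℂ := (1 : ℂ) / 2 + (α : ℂ) / 4 - (α : ℂ) * (ρ : ℂ) / 2 + w with hB'
  -- real parts
  have hDre : Dd.re = 1 / 2 + 3 * α / 4 - α * ρ / 2 := by
    have h : Dd = ((1 / 2 + 3 * α / 4 - α * ρ / 2 : ℝ) : ℂ) - w := by
      rw [hDd]; push_cast; ring
    rw [h, Complex.sub_re, Complex.ofReal_re, hw0, sub_zero]
  have hB're : B'.re = 1 / 2 + α / 4 - α * ρ / 2 := by
    have h : B' = ((1 / 2 + α / 4 - α * ρ / 2 : ℝ) : ℂ) + w := by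
      rw [hB']; push_cast; ring
    rw [h, Complex.add_re, Complex.ofReal_re, hw0, add_zero]
  have hCre : Cc.re = 1 / 2 + 5 * α / 4 - α * ρ / 2 := by
    have h : Cc = ((1 / 2 + 5 * α / 4 - α * ρ / 2 : ℝ) : ℂ) + w := by
      rw [hCc]; push_cast; ring
    rw [h, Complex.add_re, Complex.ofReal_re, hw0, add_zero]
  -- H1 at Dd gives S Dd * S A = 1
  have h1 : S Dd * S A = 1 := by
    have := H1 Dd (by rw [hDre]; nlinarith) (by rw [hDre]; nlinarith)
    rwa [show (1 : ℂ) + (α : ℂ) - Dd = A by rw [hA, hDd]; push_cast; ring] at this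
  -- H2 at B' gives S B' = 2 sin(π B') S Cc
  have h2 : S B' = 2 * Complex.sin ((Real.pi : ℂ) * B') * S Cc := by
    have := H2 B' (by rw [hB're]; nlinarith) (by rw [hB're]; nlinarith)
    rwa [show B' + (α : ℂ) = Cc by rw [hB', hCc]; push_cast; ring] at this
  -- H1 at B' gives S B' * S B = 1
  have h3 : S B' * S B = 1 := by
    have := H1 B' (by rw [hB're]; nlinarith) (by rw [hB're]; nlinarith)
    rwa [show (1 : ℂ) + (α : ℂ) - B' = B by rw [hB, hB']; push_cast; ring] at this
  -- the product of the four S-values times 2 sin(π B') equals 1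
  have key : S A * S B * S Cc * S Dd * (2 * Complex.sin ((Real.pi : ℂ) * B')) = 1 := by
    calc S A * S B * S Cc * S Dd * (2 * Complex.sin ((Real.pi : ℂ) * B'))
        = (S Dd * S A) * ((2 * Complex.sin ((Real.pi : ℂ) * B') * S Cc) * S B) := by ring
      _ = 1 := by rw [← h2, h1, h3, one_mul]
  -- the exponential c0
  set c0 : ℂ := Complex.exp (Complex.I * (Real.pi : ℂ) * (α : ℂ) * ((1 : ℂ) / 2 - (ρ : ℂ)) / 2
      + (α : ℂ) * l / 2) with hc0
  have hc0ne : c0 ≠ 0 := Complex.exp_ne_zero _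
  -- exp(π B' I) = I c0
  have h2e : Complex.exp ((Real.pi : ℂ) * B' * Complex.I) = Complex.I * c0 := by
    have harg : (Real.pi : ℂ) * B' * Complex.I
        = (Real.pi : ℂ) / 2 * Complex.I
          + (Complex.I * (Real.pi : ℂ) * (α : ℂ) * ((1 : ℂ) / 2 - (ρ : ℂ)) / 2
            + (α : ℂ) * l / 2) := by
      rw [hB']; linear_combination hwI
    rw [harg, Complex.exp_add, hc0]
    congr 1
    rw [show (Real.pi : ℂ) / 2 * Complex.I = ((Real.pi : ℂ) / 2) * Complex.I from rfl,
      Complex.exp_mul_I, Complex.cos_pi_div_two, Complex.sin_pi_div_two, zero_add, one_mul]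
  have h1e : Complex.exp (-((Real.pi : ℂ) * B') * Complex.I) = -Complex.I * c0⁻¹ := by
    rw [show -((Real.pi : ℂ) * B') * Complex.I = -((Real.pi : ℂ) * B' * Complex.I) by ring,
      Complex.exp_neg, h2e, mul_inv, Complex.inv_I]
  -- 2 sin(π B') = c0 + c0⁻¹
  have hsin : 2 * Complex.sin ((Real.pi : ℂ) * B') = c0 + c0⁻¹ := by
    rw [Complex.sin, h1e, h2e]
    linear_combination (-(c0 + c0⁻¹)) * Complex.I_sq
  -- the denominator factors as c0 * (c0 + c0⁻¹)
  have hD : 1 + ((z ^ α : ℝ) : ℂ)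
      * Complex.exp (Complex.I * (Real.pi : ℂ) * (α : ℂ) * ((1 : ℂ) / 2 - (ρ : ℂ)))
      = c0 * (c0 + c0⁻¹) := by
    have hsq : c0 * c0 = ((z ^ α : ℝ) : ℂ)
        * Complex.exp (Complex.I * (Real.pi : ℂ) * (α : ℂ) * ((1 : ℂ) / 2 - (ρ : ℂ))) := by
      rw [hc0, ← Complex.exp_add, rpow_cast_cx z α hz, ← Complex.exp_add, ← hl]
      congr 1
      ring
    have hinv : c0 * c0⁻¹ = 1 := mul_inv_cancel₀ hc0ne
    linear_combination -hsq - hinv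
  -- the prefactor equals c0⁻¹
  have hC : Complex.exp (Complex.I * (Real.pi : ℂ) * (α : ℂ) * (ρ : ℂ) / 4)
      * ((z ^ (-(α * ρ) / 2) : ℝ) : ℂ)
      * Complex.exp (-(Complex.I * (Real.pi : ℂ) * (α : ℂ) * ((1 : ℂ) - (ρ : ℂ))) / 4)
      * ((z ^ (-(α * (1 - ρ)) / 2) : ℝ) : ℂ) = c0⁻¹ := by
    rw [rpow_cast_cx z (-(α * ρ) / 2) hz, rpow_cast_cx z (-(α * (1 - ρ)) / 2) hz, ← hl,
      hc0, ← Complex.exp_neg, ← Complex.exp_add, ← Complex.exp_add, ← Complex.exp_add]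
    congr 1
    push_cast
    ring
  -- the product of S values is the inverse of c0 + c0⁻¹
  have hP : S A * S B * S Cc * S Dd = (c0 + c0⁻¹)⁻¹ := by
    apply eq_inv_of_mul_eq_one_left
    rw [← hsin] at *
    linear_combination key
  calc Complex.exp (Complex.I * (Real.pi : ℂ) * (α : ℂ) * (ρ : ℂ) / 4)
        * ((z ^ (-(α * ρ) / 2) : ℝ) : ℂ) * S A * S B
      * (Complex.exp (-(Complex.I * (Real.pi : ℂ) * (α : ℂ) * ((1 : ℂ) - (ρ : ℂ))) / 4)
        * ((z ^ (-(α * (1 - ρ)) / 2) : ℝ) : ℂ) * S Cc * S Dd)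
      = (Complex.exp (Complex.I * (Real.pi : ℂ) * (α : ℂ) * (ρ : ℂ) / 4)
          * ((z ^ (-(α * ρ) / 2) : ℝ) : ℂ)
          * Complex.exp (-(Complex.I * (Real.pi : ℂ) * (α : ℂ) * ((1 : ℂ) - (ρ : ℂ))) / 4)
          * ((z ^ (-(α * (1 - ρ)) / 2) : ℝ) : ℂ))
        * (S A * S B * S Cc * S Dd) := by ring
    _ = c0⁻¹ * (c0 + c0⁻¹)⁻¹ := by rw [hC, hP]
    _ = 1 / (c0 * (c0 + c0⁻¹)) := by rw [one_div, mul_inv]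
    _ = 1 / (1 + ((z ^ α : ℝ) : ℂ)
        * Complex.exp (Complex.I * (Real.pi : ℂ) * (α : ℂ) * ((1 : ℂ) / 2 - (ρ : ℂ)))) := by
      rw [hD]
end

section
/- Let α ∈ (0,2], ρ ∈ (0,1), and set ρ̂ := 1 − ρ. Define K(x) := e^{−x cos(πρ)} · sin(x sin(πρ) + πρ̂(1 − αρ)/2) for x ∈ ℝ. Then for every real x: −i · sin(πρ) · exp(−x e^{iπρ} + iπαρρ̂/2 + 3πiρ/2) = K(x) + e^{iπρ} K′(x), where K′ denotes the derivative of K with respect to x. -/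
/-- The elementary identity from the proof of Lemma 3.9(iii): for
`K(x) = e^{-x cos(πρ)} sin(x sin(πρ) + πρ̂(1 - αρ)/2)` (with `ρ̂ = 1 - ρ`) one has
`-i sin(πρ) exp(-x e^{iπρ} + iπαρρ̂/2 + 3πiρ/2) = K(x) + e^{iπρ} K'(x)`. -/
theorem stmt11 (α ρ : ℝ) (hα1 : 0 < α) (hα2 : α ≤ 2) (hρ1 : 0 < ρ) (hρ2 : ρ < 1)
    (K : ℝ → ℝ)
    (hK : ∀ x : ℝ, K x = Real.exp (-x * Real.cos (Real.pi * ρ)) *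
      Real.sin (x * Real.sin (Real.pi * ρ) + Real.pi * (1 - ρ) * (1 - α * ρ) / 2)) :
    ∀ x : ℝ,
      -Complex.I * (Real.sin (Real.pi * ρ) : ℂ) *
        Complex.exp (-(x : ℂ) * Complex.exp (Complex.I * (Real.pi : ℂ) * (ρ : ℂ))
          + Complex.I * (Real.pi : ℂ) * (α : ℂ) * (ρ : ℂ) * ((1 : ℂ) - (ρ : ℂ)) / 2
          + 3 * (Real.pi : ℂ) * Complex.I * (ρ : ℂ) / 2) =
      ((K x : ℝ) : ℂ) +
        Complex.exp (Complex.I * (Real.pi : ℂ) * (ρ : ℂ)) * ((deriv K x : ℝ) : ℂ) := by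
  intro x
  set t : ℝ := Real.pi * ρ with ht
  set c : ℝ := Real.cos t with hc
  set s : ℝ := Real.sin t with hs
  set C : ℝ := Real.pi * (1 - ρ) * (1 - α * ρ) / 2 with hC
  set θ : ℝ := x * s + C with hθ
  -- derivative of K
  have hKfun : K = fun y : ℝ => Real.exp (-y * c) * Real.sin (y * s + C) := funext hK
  have hd : HasDerivAt K (Real.exp (-x * c) * (-c * Real.sin θ + s * Real.cos θ)) x := by
    rw [hKfun]
    have h1 : HasDerivAt (fun y : ℝ => Real.exp (-y * c)) (Real.exp (-x * c) * (-c)) x := by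
      have := ((hasDerivAt_id x).neg.mul_const c).exp
      simpa using this
    have h2 : HasDerivAt (fun y : ℝ => Real.sin (y * s + C)) (Real.cos θ * s) x := by
      have := (((hasDerivAt_id x).mul_const s).add_const C).sin
      simpa [hθ] using this
    have : HasDerivAt (fun y => Real.exp (-y * c) * Real.sin (y * s + C)) _ x := h1.mul h2
    convert this using 1
    ring
  rw [hd.deriv]
  -- the imaginary phase
  set ψ : ℝ := -x * s + Real.pi * α * ρ * (1 - ρ) / 2 + 3 * Real.pi * ρ / 2 with hψ
  have hexp1 : Complex.exp (Complex.I * (Real.pi : ℂ) * (ρ : ℂ)) = (c : ℂ) + (s : ℂ) * Complex.I := by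
    rw [show Complex.I * (Real.pi : ℂ) * (ρ : ℂ) = ((Real.pi * ρ : ℝ) : ℂ) * Complex.I by
      push_cast; ring, Complex.exp_mul_I]
    rw [hc, hs, ht, Complex.ofReal_cos, Complex.ofReal_sin]
  have hexp2 : Complex.exp (-(x : ℂ) * Complex.exp (Complex.I * (Real.pi : ℂ) * (ρ : ℂ))
          + Complex.I * (Real.pi : ℂ) * (α : ℂ) * (ρ : ℂ) * ((1 : ℂ) - (ρ : ℂ)) / 2
          + 3 * (Real.pi : ℂ) * Complex.I * (ρ : ℂ) / 2)
      = (Real.exp (-x * c) : ℂ) * ((Real.cos ψ : ℂ) + (Real.sin ψ : ℂ) * Complex.I) := by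
    rw [hexp1]
    rw [show -(x : ℂ) * ((c : ℂ) + (s : ℂ) * Complex.I)
          + Complex.I * (Real.pi : ℂ) * (α : ℂ) * (ρ : ℂ) * ((1 : ℂ) - (ρ : ℂ)) / 2
          + 3 * (Real.pi : ℂ) * Complex.I * (ρ : ℂ) / 2
        = ((-x * c : ℝ) : ℂ) + ((ψ : ℝ) : ℂ) * Complex.I by
      push_cast [hψ]; ring]
    rw [Complex.exp_add, Complex.exp_mul_I, Complex.ofReal_exp, Complex.ofReal_cos, Complex.ofReal_sin]
  rw [hexp2, hexp1, hK x]
  -- key trig facts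
  have hψθ : ψ = Real.pi / 2 - (θ - t) := by
    rw [hψ, hθ, hC, ht, hs]; ring
  have hsψ : Real.sin ψ = Real.cos (θ - t) := by rw [hψθ, Real.sin_pi_div_two_sub]
  have hcψ : Real.cos ψ = Real.sin (θ - t) := by rw [hψθ, Real.cos_pi_div_two_sub]
  have hpy : s ^ 2 + c ^ 2 = 1 := by rw [hs, hc]; exact Real.sin_sq_add_cos_sq t
  have hcsub : Real.cos (θ - t) = Real.cos θ * c + Real.sin θ * s := by
    rw [Real.cos_sub, hc, hs]
  have hssub : Real.sin (θ - t) = Real.sin θ * c - Real.cos θ * s := by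
    rw [Real.sin_sub, hc, hs]
  rw [hsψ, hcψ, hcsub, hssub, ← hθ]
  have hpyC : (s : ℂ) ^ 2 + (c : ℂ) ^ 2 = 1 := by exact_mod_cast hpy
  push_cast
  set E := Complex.exp (-(x:ℂ) * (c:ℂ))
  set S := Complex.sin (θ:ℂ)
  set Co := Complex.cos (θ:ℂ)
  linear_combination (E * (s:ℂ) * Co * (s:ℂ) - E * (s:ℂ) * S * (c:ℂ)
      + ((s:ℂ) * E * S * (c:ℂ) - (s:ℂ) * E * (c:ℂ) * Co - (s:ℂ)^2 * E * S - (s:ℂ)^2 * E * Co)) * Complex.I_sq +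
    E * S * hpyC
end

section
/- Let α > 0 and ρ > 0 with αρ < 1. Then there exists a constant A = A(α, ρ) > 0 such that for all y > 0: ∫₀^∞ e^{−ty} · min(t^α, t^{−αρ}) dt ≤ A · min(y^{αρ−1}, y^{−α−1}). -/
/-- The estimate (3.28) from the proof of Lemma 3.5(ii): for `α > 0`, `ρ > 0` with
`αρ < 1`, there is a constant `A = A(α, ρ) > 0` such that for all `y > 0`,
`∫₀^∞ e^{-ty} min(t^α, t^{-αρ}) dt ≤ A min(y^{αρ-1}, y^{-α-1})`. -/
theorem stmt12 (α ρ : ℝ) (hα : 0 < α) (hρ : 0 < ρ) (h : α * ρ < 1) :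
    ∃ A > 0, ∀ y : ℝ, 0 < y →
      (∫ t in Set.Ioi (0 : ℝ), Real.exp (-t * y) * min (t ^ α) (t ^ (-(α * ρ)))) ≤
        A * min (y ^ (α * ρ - 1)) (y ^ (-α - 1)) := by
  refine ⟨max (Real.Gamma (α + 1)) (Real.Gamma (1 - α * ρ)),
    lt_max_of_lt_left (Real.Gamma_pos_of_pos (by linarith)), fun y hy => ?_⟩
  have hΓ1 : 0 < Real.Gamma (α + 1) := Real.Gamma_pos_of_pos (by linarith)
  have hΓ2 : 0 < Real.Gamma (1 - α * ρ) := Real.Gamma_pos_of_pos (by linarith)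
  set f : ℝ → ℝ := fun t => Real.exp (-t * y) * min (t ^ α) (t ^ (-(α * ρ))) with hf
  -- integrable majorants
  have hg1 : MeasureTheory.IntegrableOn (fun t : ℝ => t ^ α * Real.exp (-y * t))
      (Set.Ioi 0) := by
    have := integrableOn_rpow_mul_exp_neg_mul_rpow (s := α) (p := 1) (b := y)
      (by linarith) zero_lt_one hy
    simpa [Real.rpow_one] using this
  have hg2 : MeasureTheory.IntegrableOn (fun t : ℝ => t ^ (-(α * ρ)) * Real.exp (-y * t))
      (Set.Ioi 0) := by
    have := integrableOn_rpow_mul_exp_neg_mul_rpow (s := -(α * ρ)) (p := 1) (b := y)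
      (by linarith) zero_lt_one hy
    simpa [Real.rpow_one] using this
  -- pointwise bounds on Ioi 0
  have hb1 : ∀ t ∈ Set.Ioi (0 : ℝ), f t ≤ t ^ α * Real.exp (-y * t) := by
    intro t ht
    have : f t ≤ Real.exp (-t * y) * t ^ α :=
      mul_le_mul_of_nonneg_left (min_le_left _ _) (Real.exp_pos _).le
    calc f t ≤ Real.exp (-t * y) * t ^ α := this
    _ = t ^ α * Real.exp (-y * t) := by ring_nf
  have hb2 : ∀ t ∈ Set.Ioi (0 : ℝ), f t ≤ t ^ (-(α * ρ)) * Real.exp (-y * t) := by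
    intro t ht
    have : f t ≤ Real.exp (-t * y) * t ^ (-(α * ρ)) :=
      mul_le_mul_of_nonneg_left (min_le_right _ _) (Real.exp_pos _).le
    calc f t ≤ Real.exp (-t * y) * t ^ (-(α * ρ)) := this
    _ = t ^ (-(α * ρ)) * Real.exp (-y * t) := by ring_nf
  -- f is integrable on Ioi 0
  have hfm : MeasureTheory.AEStronglyMeasurable f
      (MeasureTheory.volume.restrict (Set.Ioi (0 : ℝ))) := by
    apply Measurable.aestronglyMeasurable
    exact ((measurable_id.neg.mul_const y).exp.mul
      ((measurable_id.pow_const α |>.min (measurable_id.pow_const (-(α * ρ))))))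
  have hfint : MeasureTheory.IntegrableOn f (Set.Ioi 0) := by
    refine hg1.mono' hfm ?_
    filter_upwards [MeasureTheory.ae_restrict_mem measurableSet_Ioi] with t ht
    have h0 : 0 ≤ f t := by
      have ht' : (0 : ℝ) < t := ht
      have : 0 ≤ min (t ^ α) (t ^ (-(α * ρ))) :=
        le_min (Real.rpow_nonneg ht'.le _) (Real.rpow_nonneg ht'.le _)
      exact mul_nonneg (Real.exp_pos _).le this
    rw [Real.norm_eq_abs, abs_of_nonneg h0]
    exact hb1 t ht
  -- the two Gamma integral evaluations
  have hI1 : (∫ t in Set.Ioi (0 : ℝ), t ^ α * Real.exp (-y * t))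
      = Real.Gamma (α + 1) * y ^ (-α - 1) := by
    have := Real.integral_rpow_mul_exp_neg_mul_Ioi (a := α + 1) (r := y)
      (by linarith) hy
    simp only [add_sub_cancel_right] at this
    rw [show (fun t : ℝ => t ^ α * Real.exp (-y * t)) = fun t : ℝ =>
      t ^ α * Real.exp (-(y * t)) by funext t; ring_nf]
    rw [this, one_div, Real.inv_rpow hy.le, ← Real.rpow_neg hy.le, mul_comm,
      show -(α + 1) = -α - 1 by ring]
  have hI2 : (∫ t in Set.Ioi (0 : ℝ), t ^ (-(α * ρ)) * Real.exp (-y * t))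
      = Real.Gamma (1 - α * ρ) * y ^ (α * ρ - 1) := by
    have := Real.integral_rpow_mul_exp_neg_mul_Ioi (a := 1 - α * ρ) (r := y)
      (by linarith) hy
    rw [show (1 : ℝ) - α * ρ - 1 = -(α * ρ) by ring] at this
    rw [show (fun t : ℝ => t ^ (-(α * ρ)) * Real.exp (-y * t)) = fun t : ℝ =>
      t ^ (-(α * ρ)) * Real.exp (-(y * t)) by funext t; ring_nf]
    rw [this, one_div, Real.inv_rpow hy.le, ← Real.rpow_neg hy.le, mul_comm,
      show -(1 - α * ρ) = α * ρ - 1 by ring]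
  -- conclude
  have hle1 : (∫ t in Set.Ioi (0 : ℝ), f t) ≤ Real.Gamma (α + 1) * y ^ (-α - 1) := by
    rw [← hI1]
    exact MeasureTheory.setIntegral_mono_on hfint hg1 measurableSet_Ioi hb1
  have hle2 : (∫ t in Set.Ioi (0 : ℝ), f t) ≤ Real.Gamma (1 - α * ρ) * y ^ (α * ρ - 1) := by
    rw [← hI2]
    exact MeasureTheory.setIntegral_mono_on hfint hg2 measurableSet_Ioi hb2
  have hA1 : Real.Gamma (α + 1) ≤ max (Real.Gamma (α + 1)) (Real.Gamma (1 - α * ρ)) :=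
    le_max_left _ _
  have hA2 : Real.Gamma (1 - α * ρ) ≤ max (Real.Gamma (α + 1)) (Real.Gamma (1 - α * ρ)) :=
    le_max_right _ _
  rw [mul_min_of_nonneg _ _ (le_max_of_le_left hΓ1.le)]
  refine le_min ?_ ?_
  · exact hle2.trans (mul_le_mul_of_nonneg_right hA2 (Real.rpow_nonneg hy.le _))
  · exact hle1.trans (mul_le_mul_of_nonneg_right hA1 (Real.rpow_nonneg hy.le _))
end
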